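/- Let v be the 2m × 2m block matrix [[L, Lᵀ],[L, Lᵀ]] where L is the m × m lower-triangular all-ones matrix. Then the eigenvalues of v are: m + 1 with multiplicity 1, the eigenvalue 1 with multiplicity m - 1, and 0 with multiplicity m. Equivalently, the characteristic polynomial of v is x^m * (x - 1)^(m-1) * (x - (m+1)). -/

import Mathlib

open Matrix Polynomial

lemma det_smul_one_add_ones {K : Type*} [Field K] {n : ℕ} (hn : 1 ≤ n) (d a : K)
    (hd : d ≠ 0) :
    (d • (1 : Matrix (Fin n) (Fin n) K) + a • (Matrix.of fun _ _ => (1 : K))).det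
      = d ^ (n - 1) * (d + n * a) := by
  have h : d • (1 : Matrix (Fin n) (Fin n) K) + a • (Matrix.of fun _ _ => (1 : K))
      = d • ((1 : Matrix (Fin n) (Fin n) K)
          + replicateCol Unit (fun _ : Fin n => a / d) * replicateRow Unit (fun _ : Fin n => (1 : K))) := by
    ext i j
    by_cases hij : i = j <;>
      simp [hij, Matrix.mul_apply, Matrix.one_apply, mul_comm] <;>
      field_simp
  rw [h, det_smul, det_one_add_replicateCol_mul_replicateRow]
  have hdp : (fun _ : Fin n => (1:K)) ⬝ᵥ (fun _ : Fin n => a / d) = n * (a / d) := by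
    simp [dotProduct]
  rw [hdp]
  have hpow : d ^ n = d ^ (n - 1) * d := by
    conv_lhs => rw [show n = n - 1 + 1 by omega]
    ring
  rw [Fintype.card_fin, hpow]
  field_simp

open Matrix Polynomial

lemma charpoly_one_add_ones {m : ℕ} (hm : 1 ≤ m) :
    ((1 : Matrix (Fin m) (Fin m) ℝ) + Matrix.of fun _ _ => (1:ℝ)).charpoly
      = (X - 1) ^ (m - 1) * (X - C ((m:ℝ) + 1)) := by
  have hd0 : (X - 1 : ℝ[X]) ≠ 0 := by
    simpa using Polynomial.X_sub_C_ne_zero (1 : ℝ)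
  set A := (1 : Matrix (Fin m) (Fin m) ℝ) + Matrix.of fun _ _ => (1:ℝ) with hA
  have hchar : charmatrix A = ((X : ℝ[X]) - 1) • (1 : Matrix (Fin m) (Fin m) ℝ[X])
      + (-1 : ℝ[X]) • (Matrix.of fun _ _ => (1 : ℝ[X])) := by
    ext i j
    by_cases hij : i = j
    · subst hij
      simp [hA, Matrix.one_apply]
      ring
    · simp [hA, hij, Matrix.one_apply, charmatrix_apply_ne _ _ _ hij]
  set K := FractionRing ℝ[X] with hK
  set ι : ℝ[X] →+* K := algebraMap ℝ[X] K with hι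
  have hinj : Function.Injective ι := IsFractionRing.injective _ _
  apply hinj
  show ι (charmatrix A).det = ι _
  rw [RingHom.map_det, RingHom.mapMatrix_apply, hchar]
  have hmap : (( ((X : ℝ[X]) - 1) • (1 : Matrix (Fin m) (Fin m) ℝ[X])
      + (-1 : ℝ[X]) • (Matrix.of fun _ _ => (1 : ℝ[X]))).map ι)
      = (ι (X - 1)) • (1 : Matrix (Fin m) (Fin m) K)
        + (-1 : K) • (Matrix.of fun _ _ => (1 : K)) := by
    ext i j
    by_cases hij : i = j <;> simp [hij, Matrix.one_apply]
  rw [hmap, det_smul_one_add_ones hm _ _ (by simpa using (map_ne_zero_iff ι hinj).mpr hd0)]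
  have hcm : (C ((m:ℝ)+1) : ℝ[X]) = (m : ℝ[X]) + 1 := by rw [map_add, Polynomial.C_1, map_natCast C]
  rw [hcm]
  simp only [_root_.map_mul, map_pow, _root_.map_sub, _root_.map_add, _root_.map_one,
    map_natCast]
  ring

open Matrix Polynomial

lemma charpoly_conj_aux {n : Type*} [DecidableEq n] [Fintype n] {R : Type*} [CommRing R]
    (P P' M : Matrix n n R) (h2 : P' * P = 1) :
    (P' * M * P).charpoly = M.charpoly := by
  have hmap : ((P' * P).map (C : R →+* R[X])) = 1 := by
    rw [h2, Matrix.map_one _ (map_zero C) (map_one C)]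
  have hc : charmatrix (P' * M * P) = (P'.map C) * charmatrix M * (P.map C) := by
    unfold charmatrix
    rw [RingHom.mapMatrix_apply, RingHom.mapMatrix_apply, Matrix.mul_sub, Matrix.sub_mul]
    congr 1
    · rw [Matrix.mul_assoc, (Matrix.scalar_commute (X : R[X]) (fun r => Commute.all X r)
        (P.map C)).eq, ← Matrix.mul_assoc, ← Matrix.map_mul, hmap, Matrix.one_mul]
    · rw [Matrix.map_mul, Matrix.map_mul]
  unfold Matrix.charpoly
  rw [hc, det_mul, det_mul]
  have h1 : (P'.map (C : R →+* R[X])).det * (P.map C).det = 1 := by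
    rw [← det_mul, ← Matrix.map_mul, hmap, det_one]
  calc (P'.map (C : R →+* R[X])).det * (charmatrix M).det * (P.map C).det
      = ((P'.map (C : R →+* R[X])).det * (P.map C).det) * (charmatrix M).det := by ring
    _ = (charmatrix M).det := by rw [h1, one_mul]

lemma charpoly_zero_mat (m : ℕ) :
    (0 : Matrix (Fin m) (Fin m) ℝ).charpoly = X ^ m := by
  unfold Matrix.charpoly charmatrix
  simp [Matrix.det_diagonal, Matrix.scalar_apply]

theorem v_charpoly (m : ℕ) (hm : 1 ≤ m)
    (L : Matrix (Fin m) (Fin m) ℝ)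
    (hL : L = Matrix.of fun i j => if j ≤ i then 1 else 0)
    (v : Matrix (Fin m ⊕ Fin m) (Fin m ⊕ Fin m) ℝ)
    (hv : v = Matrix.fromBlocks L Lᵀ L Lᵀ) :
    v.charpoly = Polynomial.X ^ m * (Polynomial.X - 1) ^ (m - 1) *
      (Polynomial.X - Polynomial.C ((m : ℝ) + 1)) := by
  subst hv
  set e : Matrix (Fin m ⊕ Fin m) (Fin m ⊕ Fin m) ℝ := fromBlocks 1 0 1 1 with he
  set e' : Matrix (Fin m ⊕ Fin m) (Fin m ⊕ Fin m) ℝ := fromBlocks 1 0 (-1) 1 with he'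
  have he'e : e' * e = 1 := by
    rw [he, he', fromBlocks_multiply]
    simp [← fromBlocks_one]
  have hw : e' * (fromBlocks L Lᵀ L Lᵀ) * e = fromBlocks (L + Lᵀ) Lᵀ 0 0 := by
    rw [he, he', fromBlocks_multiply, fromBlocks_multiply]
    simp
  have key := charpoly_conj_aux e e' (fromBlocks L Lᵀ L Lᵀ) he'e
  rw [← key, hw, charpoly_fromBlocks_zero₂₁, charpoly_zero_mat]
  have hLL : L + Lᵀ = (1 : Matrix (Fin m) (Fin m) ℝ) + Matrix.of fun _ _ => (1:ℝ) := by
    subst hL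
    ext i j
    simp only [Matrix.add_apply, Matrix.transpose_apply, Matrix.of_apply, Matrix.one_apply]
    rcases lt_trichotomy i j with h | h | h
    · rw [if_neg (not_le.mpr h), if_pos h.le, if_neg h.ne]
    · subst h; simp
    · rw [if_pos h.le, if_neg (not_le.mpr h), if_neg h.ne']
      ring
  rw [hLL, charpoly_one_add_ones hm]
  ring
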